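/- For z > 0, the Bessel-type integral K_{1/2}(z) := ∫_0^∞ u^{0} e^{-(z/2)(1/u² + u²)} du, i.e. ∫_0^∞ u^{2·(1/2)-1} e^{-(z/2)(u^{-2}+u²)} du, equals √(π/2) · z^{-1/2} · e^{-z}. -/

import Mathlib

open Real MeasureTheory

theorem bessel_half (z : ℝ) (hz : 0 < z) :
    ∫ u in Set.Ioi (0:ℝ), u ^ (2 * (1/2 : ℝ) - 1) * Real.exp (-(z/2) * (u⁻¹^2 + u^2))
      = Real.sqrt (π/2) * z ^ (-(1/2) : ℝ) * Real.exp (-z) := by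
  have hb : 0 < z / 2 := by linarith
  set g : ℝ → ℝ := fun t => Real.exp (-(z/2) * t^2) with hg
  set φ : ℝ → ℝ := fun u => u - u⁻¹ with hφdef
  -- derivative of φ on Ioi 0
  have hφ' : ∀ u ∈ Set.Ioi (0:ℝ), HasDerivWithinAt φ (1 + (u⁻¹)^2) (Set.Ioi 0) u := by
    intro u hu
    have h1 : HasDerivAt φ (1 - -(u^2)⁻¹) u :=
      (hasDerivAt_id u).sub (hasDerivAt_inv (ne_of_gt hu))
    have : (1 : ℝ) - -(u^2)⁻¹ = 1 + (u⁻¹)^2 := by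
      rw [inv_pow]; ring
    exact (this ▸ h1).hasDerivWithinAt
  -- injectivity
  have hmono : StrictMonoOn φ (Set.Ioi 0) := by
    intro a ha b hbb hab
    have h2 : b⁻¹ < a⁻¹ := by
      apply inv_strictAnti₀ ha hab
    simp only [hφdef]
    linarith
  have hinj : Set.InjOn φ (Set.Ioi 0) := hmono.injOn
  -- surjectivity onto univ
  have himg : φ '' Set.Ioi 0 = Set.univ := by
    apply Set.eq_univ_of_forall
    intro t
    have h4 : (0:ℝ) < t^2 + 4 := by positivity
    have hs : 0 < Real.sqrt (t^2+4) := Real.sqrt_pos.mpr h4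
    have hs2 : Real.sqrt (t^2+4)^2 = t^2+4 := Real.sq_sqrt h4.le
    set s := Real.sqrt (t^2+4) with hsdef
    have hts : 0 < t + s := by nlinarith
    refine ⟨(t+s)/2, by simpa using (by linarith : (0:ℝ) < (t+s)/2), ?_⟩
    have hinv : ((t+s)/2)⁻¹ = (s-t)/2 := by
      apply inv_eq_of_mul_eq_one_right
      field_simp
      nlinarith
    simp only [hφdef, hinv]
    ring
  -- main change of variables
  have key := integral_image_eq_integral_abs_deriv_smul measurableSet_Ioi hφ' hinj g
  rw [himg, Measure.restrict_univ] at key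
  -- inversion substitution
  have hψ' : ∀ u ∈ Set.Ioi (0:ℝ), HasDerivWithinAt (fun x : ℝ => x⁻¹) (-(u^2)⁻¹) (Set.Ioi 0) u :=
    fun u hu => (hasDerivAt_inv (ne_of_gt hu)).hasDerivWithinAt
  have hψinj : Set.InjOn (fun x : ℝ => x⁻¹) (Set.Ioi 0) := inv_injective.injOn
  have hψimg : (fun x : ℝ => x⁻¹) '' Set.Ioi 0 = Set.Ioi 0 := by
    ext x
    simp only [Set.mem_image, Set.mem_Ioi]
    constructor
    · rintro ⟨y, hy, rfl⟩; positivity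
    · intro hx; exact ⟨x⁻¹, by positivity, by simp⟩
  have keyJ := integral_image_eq_integral_abs_deriv_smul measurableSet_Ioi hψ' hψinj
    (fun u => g (φ u))
  rw [hψimg] at keyJ
  -- simplify keyJ: on Ioi 0, |-(u^2)⁻¹| • g (φ u⁻¹) = (u⁻¹)^2 * g (φ u)
  have keyJ' : (∫ u in Set.Ioi (0:ℝ), g (φ u)) = ∫ u in Set.Ioi (0:ℝ), (u⁻¹)^2 * g (φ u) := by
    rw [keyJ]
    apply setIntegral_congr_fun measurableSet_Ioi
    intro u hu
    have hu0 : (0:ℝ) < u := hu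
    have h1 : |(-(u^2)⁻¹)| = (u⁻¹)^2 := by
      rw [abs_neg, abs_inv, abs_of_pos (by positivity : (0:ℝ) < u^2), inv_pow]
    have h2 : φ u⁻¹ = -(φ u) := by simp only [hφdef, inv_inv]; ring
    simp only [smul_eq_mul, h1, h2, hg, neg_sq]
  -- integrability
  have hgi : Integrable g := integrable_exp_neg_mul_sq hb
  have hKi : IntegrableOn (fun u => |1 + (u⁻¹)^2| • g (φ u)) (Set.Ioi (0:ℝ)) := by
    rw [← integrableOn_image_iff_integrableOn_abs_deriv_smul measurableSet_Ioi hφ' hinj g, himg]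
    exact hgi.integrableOn
  have hmeas : Measurable fun u : ℝ => g (φ u) := by
    simp only [hg, hφdef]
    exact Real.measurable_exp.comp
      ((((measurable_id.sub measurable_inv).pow_const 2).const_mul (-(z/2))))
  have hgpos : ∀ x : ℝ, 0 < g x := fun x => Real.exp_pos _
  have hbound : ∀ u : ℝ, g (φ u) ≤ (1 + (u⁻¹)^2) * g (φ u) := by
    intro u
    nlinarith [(hgpos (φ u)).le, sq_nonneg (u⁻¹)]
  have habs : ∀ u : ℝ, |1 + (u⁻¹)^2| = 1 + (u⁻¹)^2 := by
    intro u; rw [abs_of_pos]; positivity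
  have hI : IntegrableOn (fun u => g (φ u)) (Set.Ioi (0:ℝ)) := by
    apply hKi.mono' hmeas.aestronglyMeasurable.restrict
    filter_upwards with u
    rw [Real.norm_eq_abs, abs_of_pos (hgpos _), smul_eq_mul, habs]
    exact hbound u
  have hJ : IntegrableOn (fun u => (u⁻¹)^2 * g (φ u)) (Set.Ioi (0:ℝ)) := by
    apply hKi.mono' ((measurable_inv.pow_const 2).mul hmeas).aestronglyMeasurable.restrict
    filter_upwards with u
    simp only [Pi.mul_apply]
    rw [Real.norm_eq_abs, smul_eq_mul, habs,
      abs_of_nonneg (mul_nonneg (sq_nonneg _) (hgpos (φ u)).le)]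
    nlinarith [(hgpos (φ u)).le, sq_nonneg (u⁻¹)]
  -- split the gaussian integral
  have hsplit : (∫ x, g x) =
      (∫ u in Set.Ioi (0:ℝ), g (φ u)) + ∫ u in Set.Ioi (0:ℝ), (u⁻¹)^2 * g (φ u) := by
    rw [key, ← integral_add hI hJ]
    apply setIntegral_congr_fun measurableSet_Ioi
    intro u hu
    simp only [smul_eq_mul, habs]
    ring
  have hgauss : (∫ x, g x) = Real.sqrt (π / (z/2)) := integral_gaussian (z/2)
  have hIval : (∫ u in Set.Ioi (0:ℝ), g (φ u)) = Real.sqrt (π / (z/2)) / 2 := by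
    rw [← keyJ'] at hsplit
    linarith [hsplit.symm.trans hgauss]
  -- rewrite the original integrand
  have hcongr : (∫ u in Set.Ioi (0:ℝ),
      u ^ (2 * (1/2 : ℝ) - 1) * Real.exp (-(z/2) * (u⁻¹^2 + u^2)))
      = ∫ u in Set.Ioi (0:ℝ), g (φ u) * Real.exp (-z) := by
    apply setIntegral_congr_fun measurableSet_Ioi
    intro u hu
    have hu0 : (0:ℝ) < u := hu
    have hpow : u ^ (2 * (1/2 : ℝ) - 1) = 1 := by
      rw [show (2 * (1/2 : ℝ) - 1) = 0 by norm_num, Real.rpow_zero]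
    have hexp : -(z/2) * (u⁻¹^2 + u^2) = -(z/2) * (φ u)^2 + -z := by
      have hune : u ≠ 0 := ne_of_gt hu0
      simp only [hφdef]
      field_simp
      ring
    show u ^ (2 * (1/2 : ℝ) - 1) * Real.exp (-(z/2) * (u⁻¹^2 + u^2)) = g (φ u) * Real.exp (-z)
    simp only [hg]
    rw [hpow, one_mul, hexp, Real.exp_add]
  rw [hcongr, integral_mul_const, hIval]
  -- final arithmetic
  have hz' : z ^ (-(1/2) : ℝ) = (Real.sqrt z)⁻¹ := by
    rw [Real.rpow_neg hz.le, ← Real.sqrt_eq_rpow]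
  rw [hz']
  have harith : Real.sqrt (π / (z/2)) / 2 = Real.sqrt (π/2) * (Real.sqrt z)⁻¹ := by
    rw [← Real.sqrt_inv, ← Real.sqrt_mul (by positivity : (0:ℝ) ≤ π/2)]
    rw [show π / (z/2) = (π/2 * z⁻¹) * 4 by field_simp; ring]
    rw [Real.sqrt_mul (by positivity), show (4:ℝ) = 2^2 by norm_num,
      Real.sqrt_sq (by norm_num : (0:ℝ) ≤ 2)]
    ring
  rw [harith]
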